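/- Let m and k be positive integers and set A(m,k) = m · k · ∏_{i=2}^{2m+1}(ik+1). In any k-geodetic graph, no ladder-like structure of width m has height exceeding A(m,k); that is, for any pair of asynchronously disjoint geodesics γ₁, γ₂ of the same length n, the number of indices i ∈ {0,...,n} with d(γ₁(i), γ₂(i)) = m is at most A(m,k). -/

import Mathlib

open Finset

namespace LadderAux

variable {V : Type*} {X : SimpleGraph V}

lemma exists_walk_fn_aux : ∀ (L : ℕ) (f : ℕ → V), (∀ i, i < L → X.Adj (f i) (f (i + 1))) →
    ∃ W : X.Walk (f 0) (f L), W.length = L ∧ ∀ i, i ≤ L → W.getVert i = f i := by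
  intro L
  induction L with
  | zero =>
    intro f _
    refine ⟨.nil, rfl, fun i hi => ?_⟩
    have : i = 0 := by omega
    subst this
    simp
  | succ L IH =>
    intro f hadj
    obtain ⟨W, hlen, hvert⟩ := IH (fun i => f (i + 1)) (fun i hi => hadj (i + 1) (by omega))
    refine ⟨.cons (hadj 0 (Nat.succ_pos L)) W, by simp [hlen], fun i hi => ?_⟩
    cases i with
    | zero => simp
    | succ i =>
      rw [SimpleGraph.Walk.getVert_cons_succ]
      exact hvert i (by omega)

lemma exists_walk_fn {u v : V} (f : ℕ → V) (L : ℕ) (h0 : f 0 = u) (hL : f L = v)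
    (hadj : ∀ i, i < L → X.Adj (f i) (f (i + 1))) :
    ∃ W : X.Walk u v, W.length = L ∧ ∀ i, i ≤ L → W.getVert i = f i := by
  subst h0; subst hL
  exact exists_walk_fn_aux L f hadj

lemma dist_getVert_le (hc : X.Connected) {u v : V} (W : X.Walk u v) (i j : ℕ) (hij : i ≤ j) :
    X.dist (W.getVert i) (W.getVert j) ≤ j - i := by
  induction j with
  | zero =>
    have : i = 0 := by omega
    subst this
    simp
  | succ j IH =>
    rcases Nat.lt_or_ge i (j + 1) with h | h
    · have h1 : X.dist (W.getVert j) (W.getVert (j + 1)) ≤ 1 := by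
        rcases Nat.lt_or_ge j W.length with hj | hj
        · have := SimpleGraph.dist_le (SimpleGraph.Walk.cons (W.adj_getVert_succ hj) SimpleGraph.Walk.nil)
          simpa using this
        · rw [W.getVert_of_length_le hj, W.getVert_of_length_le (by omega),
            SimpleGraph.dist_self]
          omega
      have h2 := IH (by omega)
      have h3 : X.dist (W.getVert i) (W.getVert (j + 1)) ≤
          X.dist (W.getVert i) (W.getVert j) + X.dist (W.getVert j) (W.getVert (j + 1)) :=
        hc.dist_triangle
      omega
    · have : i = j + 1 := by omega
      subst this
      simp

lemma exists_geodesic_fn (hc : X.Connected) (a b : V) :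
    ∃ f : ℕ → V, f 0 = a ∧ f (X.dist a b) = b ∧
      (∀ i, i < X.dist a b → X.Adj (f i) (f (i + 1))) ∧
      (∀ i, i ≤ X.dist a b → X.dist a (f i) = i ∧ X.dist (f i) b = X.dist a b - i) := by
  obtain ⟨W, hW⟩ := hc.exists_walk_length_eq_dist a b
  refine ⟨W.getVert, W.getVert_zero, by rw [← hW]; exact W.getVert_length,
    fun i hi => W.adj_getVert_succ (by omega), fun i hi => ?_⟩
  have h1 := dist_getVert_le hc W 0 i (Nat.zero_le i)
  rw [W.getVert_zero] at h1
  have h2 := dist_getVert_le hc W i W.length (by omega)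
  rw [W.getVert_length] at h2
  have h3 : X.dist a b ≤ X.dist a (W.getVert i) + X.dist (W.getVert i) b := hc.dist_triangle
  constructor <;> omega

lemma geom_helper (k : ℕ) : ∀ e : ℕ, k * (∑ b ∈ range e, (k + 1) ^ b) + 1 = (k + 1) ^ e := by
  intro e
  induction e with
  | zero => simp
  | succ e IH =>
    have h : (k + 1) ^ (e + 1) = (k + 1) ^ e * k + (k + 1) ^ e := by ring
    rw [sum_range_succ, mul_add, h, ← IH]
    ring

lemma sum_le_prod (k : ℕ) (hk : 0 < k) :
    ∀ e : ℕ, (∑ b ∈ range (e + 1), (k + 1) ^ b) ≤ ∏ i ∈ Icc 2 (e + 1), (i * k + 1) := by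
  intro e
  induction e with
  | zero => simp
  | succ e IH =>
    rw [sum_range_succ, Finset.prod_Icc_succ_top (by omega : 2 ≤ e + 1 + 1)]
    have h1 : (k + 1) ^ e ≤ ∑ b ∈ range (e + 1), (k + 1) ^ b := by
      exact Finset.single_le_sum (f := fun b => (k + 1) ^ b) (fun _ _ => Nat.zero_le _)
        (self_mem_range_succ e)
    have h2 : (k + 1) ^ (e + 1) ≤ (∏ i ∈ Icc 2 (e + 1), (i * k + 1)) * ((e + 2) * k) := by
      have h3 : (k + 1) ^ (e + 1) = (k + 1) ^ e * (k + 1) := by ring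
      rw [h3]
      have h4 : (k + 1) ^ e ≤ ∏ i ∈ Icc 2 (e + 1), (i * k + 1) := le_trans h1 IH
      have h5 : (k + 1) ≤ (e + 2) * k := by nlinarith
      exact Nat.mul_le_mul h4 h5
    have h6 : (e + 1 + 1) * k + 1 = (e + 2) * k + 1 := by ring
    rw [h6, Nat.mul_add, Nat.mul_one]
    omega

end LadderAux

/-- A connected simple graph is `k`-geodetic if between any pair of vertices there are
at most `k` geodesics (walks of minimal length between their endpoints). -/
def IsKGeodetic {V : Type*} (X : SimpleGraph V) (k : ℕ) : Prop :=
  X.Connected ∧ ∀ (u v : V) (s : Finset (X.Walk u v)),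
    (∀ p ∈ s, p.length = X.dist u v) → s.card ≤ k

/-- With `A(m,k) = m · k · ∏_{i=2}^{2m+1} (i k + 1)`, in any `k`-geodetic
graph a ladder-like structure of width `m` has height at most `A(m,k)`: for any pair of
asynchronously disjoint geodesics `p₁, p₂` of the same length `n`, the number of indices
`i ∈ {0, …, n}` at which the two geodesics are `m`-apart is at most `A(m,k)`. -/
theorem ladder_height_bound {V : Type*} (X : SimpleGraph V) (m k : ℕ)
    (hm : 0 < m) (hk : 0 < k) (hX : IsKGeodetic X k)
    {u₁ v₁ u₂ v₂ : V} (n : ℕ)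
    (p₁ : X.Walk u₁ v₁) (p₂ : X.Walk u₂ v₂)
    (hn₁ : p₁.length = n) (hn₂ : p₂.length = n)
    (hgeo₁ : p₁.length = X.dist u₁ v₁) (hgeo₂ : p₂.length = X.dist u₂ v₂)
    (hdisj : ∀ i j, i ≤ n → j ≤ n → i ≠ j → p₁.getVert i ≠ p₂.getVert j) :
    ((Finset.range (n + 1)).filter
        (fun i => X.dist (p₁.getVert i) (p₂.getVert i) = m)).card
      ≤ m * (k * ∏ i ∈ Finset.Icc 2 (2 * m + 1), (i * k + 1)) := by
  classical
  obtain ⟨hconn, hcount⟩ := hX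
  have htri : ∀ a b c : V, X.dist a c ≤ X.dist a b + X.dist b c :=
    fun a b c => hconn.dist_triangle
  have hv₁ : p₁.getVert n = v₁ := by rw [← hn₁]; exact p₁.getVert_length
  have hv₂ : p₂.getVert n = v₂ := by rw [← hn₂]; exact p₂.getVert_length
  have hd₁ : X.dist u₁ v₁ = n := by rw [← hgeo₁]; exact hn₁
  have hd₂ : X.dist u₂ v₂ = n := by rw [← hgeo₂]; exact hn₂
  have hseg₁ : ∀ i j, i ≤ j → j ≤ n → X.dist (p₁.getVert i) (p₁.getVert j) = j - i := by
    intro i j hij hjn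
    have h1 := LadderAux.dist_getVert_le hconn p₁ 0 i (Nat.zero_le i)
    rw [p₁.getVert_zero] at h1
    have h2 := LadderAux.dist_getVert_le hconn p₁ i j hij
    have h3 := LadderAux.dist_getVert_le hconn p₁ j p₁.length (by rw [hn₁]; omega)
    rw [p₁.getVert_length, hn₁] at h3
    have t1 := htri u₁ (p₁.getVert i) v₁
    have t2 := htri (p₁.getVert i) (p₁.getVert j) v₁
    omega
  have hseg₂ : ∀ i j, i ≤ j → j ≤ n → X.dist (p₂.getVert i) (p₂.getVert j) = j - i := by
    intro i j hij hjn
    have h1 := LadderAux.dist_getVert_le hconn p₂ 0 i (Nat.zero_le i)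
    rw [p₂.getVert_zero] at h1
    have h2 := LadderAux.dist_getVert_le hconn p₂ i j hij
    have h3 := LadderAux.dist_getVert_le hconn p₂ j p₂.length (by rw [hn₂]; omega)
    rw [p₂.getVert_length, hn₂] at h3
    have t1 := htri u₂ (p₂.getVert i) v₂
    have t2 := htri (p₂.getVert i) (p₂.getVert j) v₂
    omega
  have hadj₁ : ∀ i, i < n → X.Adj (p₁.getVert i) (p₁.getVert (i + 1)) :=
    fun i hi => p₁.adj_getVert_succ (by rw [hn₁]; exact hi)
  have hadj₂ : ∀ i, i < n → X.Adj (p₂.getVert i) (p₂.getVert (i + 1)) :=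
    fun i hi => p₂.adj_getVert_succ (by rw [hn₂]; exact hi)
  have gUB : ∀ x j, x ≤ j → j ≤ n → X.dist (p₁.getVert j) (p₂.getVert j) = m →
      X.dist (p₁.getVert x) (p₂.getVert j) ≤ (j - x) + m := by
    intro x j hxj hjn hr
    have h := htri (p₁.getVert x) (p₁.getVert j) (p₂.getVert j)
    rw [hseg₁ x j hxj hjn, hr] at h
    omega
  have gMono : ∀ x x' j, x ≤ x' → x' ≤ n →
      X.dist (p₁.getVert x) (p₂.getVert j) ≤ (x' - x) + X.dist (p₁.getVert x') (p₂.getVert j) := by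
    intro x x' j h1 h2
    have h := htri (p₁.getVert x) (p₁.getVert x') (p₂.getVert j)
    rw [hseg₁ x x' h1 h2] at h
    omega
  -- Main claim, by strong induction on the "defect" e.
  have claim : ∀ (e p : ℕ) (J : Finset ℕ),
      (∀ j ∈ J, j ≤ n ∧ p ≤ j ∧ X.dist (p₁.getVert j) (p₂.getVert j) = m ∧
        (X.dist (p₁.getVert p) (p₂.getVert j) : ℤ) = (j : ℤ) - (p : ℤ) + (m : ℤ) - (e : ℤ)) →
      J.card ≤ m * k * (k + 1) ^ e := by
    intro e
    induction e using Nat.strong_induction_on with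
    | _ e IH =>
    intro p J hJ
    rcases J.eq_empty_or_nonempty with rfl | hne
    · simp
    have htJ : J.max' hne ∈ J := J.max'_mem hne
    set t := J.max' hne with ht_def
    obtain ⟨htn, hpt, hrungt, hdt⟩ := hJ t htJ
    rcases Nat.eq_zero_or_pos e with he | he
    · -- base case e = 0
      subst he
      have hex : ∀ j : ℕ, ∃ W : X.Walk (p₁.getVert p) (p₂.getVert t), j ∈ J →
          W.length = X.dist (p₁.getVert p) (p₂.getVert t) ∧
          (∀ x, x ≤ j - p → W.getVert x = p₁.getVert (p + x)) ∧
          (∀ x, j - p + m ≤ x → x ≤ t - p + m → W.getVert x = p₂.getVert (p + x - m)) := by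
        intro j
        by_cases hj : j ∈ J
        swap
        · exact ⟨(hconn (p₁.getVert p) (p₂.getVert t)).some, fun h => absurd h hj⟩
        obtain ⟨hjn, hpj, hrung, hd⟩ := hJ j hj
        have hjt : j ≤ t := J.le_max' j hj
        obtain ⟨f, hf0, hfm, hfadj, hfdist⟩ :=
          LadderAux.exists_geodesic_fn hconn (p₁.getVert j) (p₂.getVert j)
        rw [hrung] at hfm hfadj hfdist
        have main : ∃ W : X.Walk (p₁.getVert p) (p₂.getVert t),
            W.length = (t - p) + m ∧
            ∀ x, x ≤ (t - p) + m → W.getVert x =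
              (if x ≤ j - p then p₁.getVert (p + x)
               else if x ≤ j - p + m then f (x - (j - p))
               else p₂.getVert (p + x - m)) := by
          apply LadderAux.exists_walk_fn
          · rw [if_pos (Nat.zero_le _)]
            norm_num
          · by_cases hjt' : j = t
            · rw [if_neg (show ¬((t - p) + m ≤ j - p) by omega),
                if_pos (show (t - p) + m ≤ j - p + m by omega)]
              rw [show (t - p) + m - (j - p) = m from by omega, hfm, hjt']
            · rw [if_neg (show ¬((t - p) + m ≤ j - p) by omega),
                if_neg (show ¬((t - p) + m ≤ j - p + m) by omega)]
              congr 1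
              omega
          · intro x hx
            rcases Nat.lt_or_ge x (j - p) with h1 | h1
            · rw [if_pos (show x ≤ j - p by omega), if_pos (show x + 1 ≤ j - p by omega)]
              rw [show p + (x + 1) = p + x + 1 from by omega]
              exact hadj₁ (p + x) (by omega)
            · rcases Nat.lt_or_ge x (j - p + m) with h2 | h2
              · rcases Nat.eq_or_lt_of_le h1 with h3 | h3
                · rw [if_pos (show x ≤ j - p by omega),
                    if_neg (show ¬(x + 1 ≤ j - p) by omega),
                    if_pos (show x + 1 ≤ j - p + m by omega)]
                  rw [show x + 1 - (j - p) = 1 from by omega,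
                    show p + x = j from by omega, ← hf0]
                  exact hfadj 0 (by omega)
                · rw [if_neg (show ¬(x ≤ j - p) by omega),
                    if_pos (show x ≤ j - p + m by omega),
                    if_neg (show ¬(x + 1 ≤ j - p) by omega),
                    if_pos (show x + 1 ≤ j - p + m by omega)]
                  rw [show x + 1 - (j - p) = (x - (j - p)) + 1 from by omega]
                  exact hfadj (x - (j - p)) (by omega)
              · rcases Nat.eq_or_lt_of_le h2 with h3 | h3
                · rw [if_neg (show ¬(x ≤ j - p) by omega),
                    if_pos (show x ≤ j - p + m by omega),
                    if_neg (show ¬(x + 1 ≤ j - p) by omega),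
                    if_neg (show ¬(x + 1 ≤ j - p + m) by omega)]
                  rw [show x - (j - p) = m from by omega, hfm,
                    show p + (x + 1) - m = j + 1 from by omega]
                  exact hadj₂ j (by omega)
                · rw [if_neg (show ¬(x ≤ j - p) by omega),
                    if_neg (show ¬(x ≤ j - p + m) by omega),
                    if_neg (show ¬(x + 1 ≤ j - p) by omega),
                    if_neg (show ¬(x + 1 ≤ j - p + m) by omega)]
                  rw [show p + (x + 1) - m = (p + x - m) + 1 from by omega]
                  exact hadj₂ (p + x - m) (by omega)
        obtain ⟨W, hWlen, hWvert⟩ := main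
        have hlen' : X.dist (p₁.getVert p) (p₂.getVert t) = (t - p) + m := by omega
        refine ⟨W, fun _ => ⟨by rw [hWlen, hlen'], ?_, ?_⟩⟩
        · intro x hxq
          rw [hWvert x (by omega), if_pos hxq]
        · intro x hx1 hx2
          rcases Nat.eq_or_lt_of_le hx1 with h3 | h3
          · rw [hWvert x hx2, if_neg (show ¬(x ≤ j - p) by omega),
              if_pos (show x ≤ j - p + m by omega),
              show x - (j - p) = m from by omega, hfm]
            congr 1
            omega
          · rw [hWvert x hx2, if_neg (show ¬(x ≤ j - p) by omega),
              if_neg (show ¬(x ≤ j - p + m) by omega)]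
      choose FW hFW using hex
      have himg : (J.image FW).card ≤ k := by
        apply hcount
        intro q hq
        obtain ⟨j, hjJ, rfl⟩ := Finset.mem_image.mp hq
        exact (hFW j hjJ).1
      have hfib : ∀ w ∈ J.image FW, (J.filter (fun j => FW j = w)).card ≤ m := by
        intro w hw
        set Fib := J.filter (fun j => FW j = w) with hFibdef
        rcases Fib.eq_empty_or_nonempty with hemp | hfne
        · rw [hemp, Finset.card_empty]; omega
        have hsub : Fib ⊆ Finset.Ico (Fib.min' hfne) (Fib.min' hfne + m) := by
          intro j hjF
          have hj₁j : Fib.min' hfne ≤ j := Finset.min'_le _ j hjF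
          rw [Finset.mem_Ico]
          refine ⟨hj₁j, ?_⟩
          by_contra hcon
          push_neg at hcon
          have hj₁F : Fib.min' hfne ∈ Fib := Finset.min'_mem _ hfne
          have hjJ : j ∈ J := (Finset.mem_filter.mp hjF).1
          have hj₁J : Fib.min' hfne ∈ J := (Finset.mem_filter.mp hj₁F).1
          have hWeq : FW j = FW (Fib.min' hfne) := by
            rw [(Finset.mem_filter.mp hjF).2, (Finset.mem_filter.mp hj₁F).2]
          obtain ⟨_, P1j, _⟩ := hFW j hjJ
          obtain ⟨_, _, P2j₁⟩ := hFW (Fib.min' hfne) hj₁J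
          obtain ⟨hjn, hpj, _, _⟩ := hJ j hjJ
          obtain ⟨hj₁n, hpj₁, _, _⟩ := hJ (Fib.min' hfne) hj₁J
          have hjt : j ≤ t := J.le_max' j hjJ
          have hv1 : (FW j).getVert (j - p) = p₁.getVert j := by
            rw [P1j (j - p) le_rfl]
            congr 1
            omega
          have hv2 : (FW (Fib.min' hfne)).getVert (j - p) =
              p₂.getVert (p + (j - p) - m) :=
            P2j₁ (j - p) (by omega) (by omega)
          rw [hWeq, hv2] at hv1
          exact hdisj j (p + (j - p) - m) hjn (by omega) (by omega) hv1.symm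
        calc Fib.card ≤ (Finset.Ico (Fib.min' hfne) (Fib.min' hfne + m)).card :=
              Finset.card_le_card hsub
          _ = m := by rw [Nat.card_Ico]; omega
      have hJcard := Finset.card_le_mul_card_image (f := FW) J m hfib
      calc J.card ≤ m * (J.image FW).card := hJcard
        _ ≤ m * k := Nat.mul_le_mul_left _ himg
        _ = m * k * (k + 1) ^ 0 := by simp
    · -- inductive case e ≥ 1
      have hex : ∀ j : ℕ, ∃ (q : ℕ) (W : X.Walk (p₁.getVert p) (p₂.getVert t)), j ∈ J →
          (p ≤ q ∧ q < j ∧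
           (X.dist (p₁.getVert q) (p₂.getVert j) : ℤ) = (j : ℤ) - q + m - e ∧
           (∀ x, q < x → x ≤ j →
             (X.dist (p₁.getVert x) (p₂.getVert j) : ℤ) ≠ (j : ℤ) - x + m - e) ∧
           W.length = X.dist (p₁.getVert p) (p₂.getVert t) ∧
           (∀ x, x ≤ q - p → W.getVert x = p₁.getVert (p + x)) ∧
           (X.dist (W.getVert (q - p + 1)) (p₂.getVert j) : ℤ) = (j : ℤ) - q + m - e - 1) := by
        intro j
        by_cases hj : j ∈ J
        swap
        · exact ⟨0, (hconn (p₁.getVert p) (p₂.getVert t)).some, fun h => absurd h hj⟩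
        obtain ⟨hjn, hpj, hrung, hd⟩ := hJ j hj
        have hjt : j ≤ t := J.le_max' j hj
        have hpQ : p ∈ (Finset.Icc p j).filter
            (fun x => (X.dist (p₁.getVert x) (p₂.getVert j) : ℤ) = (j : ℤ) - x + m - e) := by
          rw [Finset.mem_filter, Finset.mem_Icc]
          exact ⟨⟨le_rfl, hpj⟩, hd⟩
        have hQne : ((Finset.Icc p j).filter
            (fun x => (X.dist (p₁.getVert x) (p₂.getVert j) : ℤ) = (j : ℤ) - x + m - e)).Nonempty :=
          ⟨p, hpQ⟩
        set q := ((Finset.Icc p j).filter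
            (fun x => (X.dist (p₁.getVert x) (p₂.getVert j) : ℤ) = (j : ℤ) - x + m - e)).max' hQne
          with hqdef
        have hqQ := Finset.max'_mem _ hQne
        rw [← hqdef, Finset.mem_filter, Finset.mem_Icc] at hqQ
        obtain ⟨⟨hpq, hqj⟩, hqchar⟩ := hqQ
        have hqlt : q < j := by
          rcases Nat.eq_or_lt_of_le hqj with h | h
          · exfalso
            rw [h, hrung] at hqchar
            omega
          · exact h
        have hqmax : ∀ x, q < x → x ≤ j →
            (X.dist (p₁.getVert x) (p₂.getVert j) : ℤ) ≠ (j : ℤ) - x + m - e := by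
          intro x hx1 hx2 hcon
          have hxQ : x ∈ (Finset.Icc p j).filter
              (fun x => (X.dist (p₁.getVert x) (p₂.getVert j) : ℤ) = (j : ℤ) - x + m - e) := by
            rw [Finset.mem_filter, Finset.mem_Icc]
            exact ⟨⟨by omega, hx2⟩, hcon⟩
          have := Finset.le_max' _ x hxQ
          rw [← hqdef] at this
          omega
        have hd1 : 1 ≤ X.dist (p₁.getVert q) (p₂.getVert j) := by
          by_contra hcon
          push_neg at hcon
          have h0 : X.dist (p₁.getVert q) (p₂.getVert j) = 0 := by omega
          have := (hconn.dist_eq_zero_iff).mp h0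
          exact hdisj q j (by omega) hjn (by omega) this
        obtain ⟨f, hf0, hfd, hfadj, hfdist⟩ :=
          LadderAux.exists_geodesic_fn hconn (p₁.getVert q) (p₂.getVert j)
        set d := X.dist (p₁.getVert q) (p₂.getVert j) with hddef
        have main : ∃ W : X.Walk (p₁.getVert p) (p₂.getVert t),
            W.length = (q - p) + d + (t - j) ∧
            ∀ x, x ≤ (q - p) + d + (t - j) → W.getVert x =
              (if x ≤ q - p then p₁.getVert (p + x)
               else if x ≤ q - p + d then f (x - (q - p))
               else p₂.getVert (j + (x - (q - p + d)))) := by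
          apply LadderAux.exists_walk_fn
          · rw [if_pos (Nat.zero_le _)]
            norm_num
          · by_cases hjt' : j = t
            · rw [if_neg (show ¬((q - p) + d + (t - j) ≤ q - p) by omega),
                if_pos (show (q - p) + d + (t - j) ≤ q - p + d by omega)]
              rw [show (q - p) + d + (t - j) - (q - p) = d from by omega, hfd, hjt']
            · rw [if_neg (show ¬((q - p) + d + (t - j) ≤ q - p) by omega),
                if_neg (show ¬((q - p) + d + (t - j) ≤ q - p + d) by omega)]
              congr 1
              omega
          · intro x hx
            rcases Nat.lt_or_ge x (q - p) with h1 | h1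
            · rw [if_pos (show x ≤ q - p by omega), if_pos (show x + 1 ≤ q - p by omega)]
              rw [show p + (x + 1) = p + x + 1 from by omega]
              exact hadj₁ (p + x) (by omega)
            · rcases Nat.lt_or_ge x (q - p + d) with h2 | h2
              · rcases Nat.eq_or_lt_of_le h1 with h3 | h3
                · rw [if_pos (show x ≤ q - p by omega),
                    if_neg (show ¬(x + 1 ≤ q - p) by omega),
                    if_pos (show x + 1 ≤ q - p + d by omega)]
                  rw [show x + 1 - (q - p) = 1 from by omega,
                    show p + x = q from by omega, ← hf0]
                  exact hfadj 0 (by omega)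
                · rw [if_neg (show ¬(x ≤ q - p) by omega),
                    if_pos (show x ≤ q - p + d by omega),
                    if_neg (show ¬(x + 1 ≤ q - p) by omega),
                    if_pos (show x + 1 ≤ q - p + d by omega)]
                  rw [show x + 1 - (q - p) = (x - (q - p)) + 1 from by omega]
                  exact hfadj (x - (q - p)) (by omega)
              · rcases Nat.eq_or_lt_of_le h2 with h3 | h3
                · rw [if_neg (show ¬(x ≤ q - p) by omega),
                    if_pos (show x ≤ q - p + d by omega),
                    if_neg (show ¬(x + 1 ≤ q - p) by omega),
                    if_neg (show ¬(x + 1 ≤ q - p + d) by omega)]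
                  rw [show x - (q - p) = d from by omega, hfd,
                    show j + (x + 1 - (q - p + d)) = j + 1 from by omega]
                  exact hadj₂ j (by omega)
                · rw [if_neg (show ¬(x ≤ q - p) by omega),
                    if_neg (show ¬(x ≤ q - p + d) by omega),
                    if_neg (show ¬(x + 1 ≤ q - p) by omega),
                    if_neg (show ¬(x + 1 ≤ q - p + d) by omega)]
                  rw [show j + (x + 1 - (q - p + d)) = (j + (x - (q - p + d))) + 1 from by omega]
                  exact hadj₂ (j + (x - (q - p + d))) (by omega)
        obtain ⟨W, hWlen, hWvert⟩ := main
        have hlen' : X.dist (p₁.getVert p) (p₂.getVert t) = (q - p) + d + (t - j) := by omega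
        refine ⟨q, W, fun _ => ⟨hpq, hqlt, hqchar, hqmax, by rw [hWlen, hlen'], ?_, ?_⟩⟩
        · intro x hxq
          rw [hWvert x (by omega), if_pos hxq]
        · rw [hWvert (q - p + 1) (by omega),
            if_neg (show ¬(q - p + 1 ≤ q - p) by omega),
            if_pos (show q - p + 1 ≤ q - p + d by omega),
            show q - p + 1 - (q - p) = 1 from by omega]
          have hh := (hfdist 1 (by omega)).2
          rw [hh]
          omega
      choose Pq FW hPF using hex
      have himg : (J.image FW).card ≤ k := by
        apply hcount
        intro w hw
        obtain ⟨j, hjJ, rfl⟩ := Finset.mem_image.mp hw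
        exact (hPF j hjJ).2.2.2.2.1
      have hfib : ∀ w ∈ J.image FW,
          (J.filter (fun j => FW j = w)).card ≤ ∑ b ∈ Finset.range e, m * k * (k + 1) ^ b := by
        intro w hw
        set Fib := J.filter (fun j => FW j = w) with hFibdef
        rcases Fib.eq_empty_or_nonempty with hemp | hfne
        · rw [hemp, Finset.card_empty]
          exact Nat.zero_le _
        obtain ⟨j₁, hj₁⟩ := hfne
        have hj₁J : j₁ ∈ J := (Finset.mem_filter.mp hj₁).1
        have hkey : ∀ a b₂, a ∈ Fib → b₂ ∈ Fib → Pq a < Pq b₂ → False := by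
          intro a b₂ ha hb hab
          have haJ : a ∈ J := (Finset.mem_filter.mp ha).1
          have hbJ : b₂ ∈ J := (Finset.mem_filter.mp hb).1
          have hWeq : FW a = FW b₂ := by
            rw [(Finset.mem_filter.mp ha).2, (Finset.mem_filter.mp hb).2]
          obtain ⟨hpa, haq, hchara, hmaxa, _, P1a, P2a⟩ := hPF a haJ
          obtain ⟨hpb, hbq, hcharb, hmaxb, _, P1b, P2b⟩ := hPF b₂ hbJ
          have hx₀ : (FW b₂).getVert (Pq a - p + 1) = p₁.getVert (Pq a + 1) := by
            rw [P1b (Pq a - p + 1) (by omega)]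
            congr 1
            omega
          rw [← hWeq] at hx₀
          rw [hx₀] at P2a
          apply hmaxa (Pq a + 1) (by omega) (by omega)
          omega
        have hqall : ∀ a ∈ Fib, Pq a = Pq j₁ := by
          intro a ha
          rcases lt_trichotomy (Pq a) (Pq j₁) with h | h | h
          · exact (hkey a j₁ ha hj₁ h).elim
          · exact h
          · exact (hkey j₁ a hj₁ ha h).elim
        have hval : ∀ a ∈ Fib,
            (((m : ℤ) - ((X.dist (p₁.getVert (Pq j₁ + 1)) (p₂.getVert a) : ℤ)
              - ((a : ℤ) - ((Pq j₁ : ℤ) + 1)))).toNat) ∈ Finset.range e := by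
          intro a ha
          have haJ : a ∈ J := (Finset.mem_filter.mp ha).1
          obtain ⟨han, hpa, hrunga, hda⟩ := hJ a haJ
          obtain ⟨hpa', haq', hchara, hmaxa, _, _, _⟩ := hPF a haJ
          rw [hqall a ha] at hchara hmaxa haq' hpa'
          have hub := gUB (Pq j₁ + 1) a (by omega) han hrunga
          have hmono := gMono (Pq j₁) (Pq j₁ + 1) a (by omega) (by omega)
          have hne2 := hmaxa (Pq j₁ + 1) (by omega) (by omega)
          rw [Finset.mem_range]
          omega
        have hcards := Finset.card_eq_sum_card_fiberwise hval
        rw [hcards]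
        apply Finset.sum_le_sum
        intro b hb
        apply IH b (Finset.mem_range.mp hb) (Pq j₁ + 1)
        intro a haf
        have haFib : a ∈ Fib := (Finset.mem_filter.mp haf).1
        have hcond := (Finset.mem_filter.mp haf).2
        have haJ : a ∈ J := (Finset.mem_filter.mp haFib).1
        obtain ⟨han, hpa, hrunga, hda⟩ := hJ a haJ
        obtain ⟨hpa', haq', hchara, hmaxa, _, _, _⟩ := hPF a haJ
        rw [hqall a haFib] at hchara hmaxa haq' hpa'
        have hub := gUB (Pq j₁ + 1) a (by omega) han hrunga
        refine ⟨han, by omega, hrunga, ?_⟩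
        omega
      have hJcard := Finset.card_le_mul_card_image (f := FW) J
        (∑ b ∈ Finset.range e, m * k * (k + 1) ^ b) hfib
      have hgeom := LadderAux.geom_helper k e
      have hTm : (∑ b ∈ Finset.range e, m * k * (k + 1) ^ b)
          = m * k * (∑ b ∈ Finset.range e, (k + 1) ^ b) := by
        rw [Finset.mul_sum]
      have hks : k * (∑ b ∈ Finset.range e, (k + 1) ^ b) ≤ (k + 1) ^ e := by
        rw [← hgeom]
        exact Nat.le_succ _
      calc J.card ≤ (∑ b ∈ Finset.range e, m * k * (k + 1) ^ b) * (J.image FW).card := hJcard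
        _ ≤ (∑ b ∈ Finset.range e, m * k * (k + 1) ^ b) * k := Nat.mul_le_mul_left _ himg
        _ = m * k * (k * (∑ b ∈ Finset.range e, (k + 1) ^ b)) := by rw [hTm]; ring
        _ ≤ m * k * (k + 1) ^ e := Nat.mul_le_mul_left _ hks
  -- Top-level assembly
  set S := (Finset.range (n + 1)).filter
      (fun i => X.dist (p₁.getVert i) (p₂.getVert i) = m) with hSdef
  rcases S.eq_empty_or_nonempty with hemp | hSne
  · rw [hemp, Finset.card_empty]
    exact Nat.zero_le _
  have hi₀S : S.min' hSne ∈ S := S.min'_mem hSne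
  have hi₀mem := Finset.mem_filter.mp hi₀S
  have hi₀n : S.min' hSne ≤ n := by
    have := Finset.mem_range.mp hi₀mem.1
    omega
  have hrung₀ : X.dist (p₁.getVert (S.min' hSne)) (p₂.getVert (S.min' hSne)) = m := hi₀mem.2
  have hval : ∀ j ∈ S,
      (((m : ℤ) - ((X.dist (p₁.getVert (S.min' hSne)) (p₂.getVert j) : ℤ)
        - ((j : ℤ) - (S.min' hSne : ℤ)))).toNat) ∈ Finset.range (2 * m + 1) := by
    intro j hjS
    have hj := Finset.mem_filter.mp hjS
    have hjn : j ≤ n := by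
      have := Finset.mem_range.mp hj.1
      omega
    have hi₀j : S.min' hSne ≤ j := S.min'_le j hjS
    have hub := gUB (S.min' hSne) j hi₀j hjn hj.2
    have hlb : (j - S.min' hSne : ℕ) ≤ m + X.dist (p₁.getVert (S.min' hSne)) (p₂.getVert j) := by
      have h1 := htri (p₂.getVert (S.min' hSne)) (p₁.getVert (S.min' hSne)) (p₂.getVert j)
      have h2 : X.dist (p₂.getVert (S.min' hSne)) (p₁.getVert (S.min' hSne)) = m := by
        rw [SimpleGraph.dist_comm]
        exact hrung₀
      rw [hseg₂ (S.min' hSne) j hi₀j hjn, h2] at h1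
      omega
    rw [Finset.mem_range]
    omega
  have hcards := Finset.card_eq_sum_card_fiberwise hval
  have hbound : ∀ b ∈ Finset.range (2 * m + 1),
      (S.filter (fun j => (((m : ℤ) - ((X.dist (p₁.getVert (S.min' hSne)) (p₂.getVert j) : ℤ)
        - ((j : ℤ) - (S.min' hSne : ℤ)))).toNat) = b)).card ≤ m * k * (k + 1) ^ b := by
    intro b hb
    apply claim b (S.min' hSne)
    intro j hjf
    have hjS : j ∈ S := (Finset.mem_filter.mp hjf).1
    have hcond := (Finset.mem_filter.mp hjf).2
    have hj := Finset.mem_filter.mp hjS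
    have hjn : j ≤ n := by
      have := Finset.mem_range.mp hj.1
      omega
    have hi₀j : S.min' hSne ≤ j := S.min'_le j hjS
    have hub := gUB (S.min' hSne) j hi₀j hjn hj.2
    refine ⟨hjn, hi₀j, hj.2, ?_⟩
    omega
  have hfinal : S.card ≤ m * k * (∑ b ∈ Finset.range (2 * m + 1), (k + 1) ^ b) := by
    calc S.card = _ := hcards
      _ ≤ ∑ b ∈ Finset.range (2 * m + 1), m * k * (k + 1) ^ b := Finset.sum_le_sum hbound
      _ = m * k * (∑ b ∈ Finset.range (2 * m + 1), (k + 1) ^ b) := by rw [Finset.mul_sum]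
  have hprod := LadderAux.sum_le_prod k hk (2 * m)
  calc S.card ≤ m * k * (∑ b ∈ Finset.range (2 * m + 1), (k + 1) ^ b) := hfinal
    _ ≤ m * k * (∏ i ∈ Finset.Icc 2 (2 * m + 1), (i * k + 1)) :=
        Nat.mul_le_mul_left _ hprod
    _ = m * (k * ∏ i ∈ Finset.Icc 2 (2 * m + 1), (i * k + 1)) := by ring
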